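/- Let p be a prime and n ≥ 2. Every abelian normal subgroup B of P_n is contained in T_{n−2}. -/

import Mathlib

variable (p n : ℕ)

/-- The underlying function of the generator `σ_i`. -/
def sigmaFun (i : Fin n) (lam : Fin n → ZMod p) : Fin n → ZMod p :=
  fun k => if k = i ∧ ∀ j : Fin n, j < i → lam j = 0 then lam k + 1 else lam k

lemma sigmaFun_apply_ne (i : Fin n) (lam : Fin n → ZMod p) {k : Fin n} (h : k ≠ i) :
    sigmaFun p n i lam k = lam k := by
  simp [sigmaFun, h]

/-- The inverse function of `σ_i`. -/
def sigmaInvFun (i : Fin n) (lam : Fin n → ZMod p) : Fin n → ZMod p :=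
  fun k => if k = i ∧ ∀ j : Fin n, j < i → lam j = 0 then lam k - 1 else lam k

lemma sigmaInvFun_apply_ne (i : Fin n) (lam : Fin n → ZMod p) {k : Fin n} (h : k ≠ i) :
    sigmaInvFun p n i lam k = lam k := by
  simp [sigmaInvFun, h]

lemma sigmaFun_cond (i : Fin n) (lam : Fin n → ZMod p) :
    (∀ j : Fin n, j < i → sigmaFun p n i lam j = 0) ↔ (∀ j : Fin n, j < i → lam j = 0) := by
  constructor
  · intro h j hj
    have := h j hj
    rwa [sigmaFun_apply_ne p n i lam (ne_of_lt hj)] at this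
  · intro h j hj
    rw [sigmaFun_apply_ne p n i lam (ne_of_lt hj)]
    exact h j hj

lemma sigmaInvFun_cond (i : Fin n) (lam : Fin n → ZMod p) :
    (∀ j : Fin n, j < i → sigmaInvFun p n i lam j = 0) ↔ (∀ j : Fin n, j < i → lam j = 0) := by
  constructor
  · intro h j hj
    have := h j hj
    rwa [sigmaInvFun_apply_ne p n i lam (ne_of_lt hj)] at this
  · intro h j hj
    rw [sigmaInvFun_apply_ne p n i lam (ne_of_lt hj)]
    exact h j hj

/-- The generator `σ_i` of the Sylow `p`-subgroup of `Sym(F_p^n)`: it fixes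
`(λ_0, …, λ_{n-1})` if `λ_j ≠ 0` for some `j < i`, and otherwise replaces the entry
`λ_i` by `λ_i + 1`. -/
def sigmaPerm (i : Fin n) : Equiv.Perm (Fin n → ZMod p) where
  toFun := sigmaFun p n i
  invFun := sigmaInvFun p n i
  left_inv := by
    intro lam
    funext k
    by_cases hk : k = i
    · subst hk
      show sigmaInvFun p n k (sigmaFun p n k lam) k = lam k
      by_cases hc : ∀ j : Fin n, j < k → lam j = 0
      · have hC : ∀ j : Fin n, j < k → sigmaFun p n k lam j = 0 :=
          (sigmaFun_cond p n k lam).mpr hc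
        unfold sigmaInvFun
        rw [if_pos ⟨rfl, hC⟩]
        unfold sigmaFun
        rw [if_pos ⟨rfl, hc⟩]
        ring
      · have hC : ¬ ∀ j : Fin n, j < k → sigmaFun p n k lam j = 0 :=
          fun h => hc ((sigmaFun_cond p n k lam).mp h)
        unfold sigmaInvFun
        rw [if_neg (by tauto)]
        unfold sigmaFun
        rw [if_neg (by tauto)]
    · exact (sigmaInvFun_apply_ne p n i _ hk).trans (sigmaFun_apply_ne p n i lam hk)
  right_inv := by
    intro lam
    funext k
    by_cases hk : k = i
    · subst hk
      show sigmaFun p n k (sigmaInvFun p n k lam) k = lam k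
      by_cases hc : ∀ j : Fin n, j < k → lam j = 0
      · have hC : ∀ j : Fin n, j < k → sigmaInvFun p n k lam j = 0 :=
          (sigmaInvFun_cond p n k lam).mpr hc
        unfold sigmaFun
        rw [if_pos ⟨rfl, hC⟩]
        unfold sigmaInvFun
        rw [if_pos ⟨rfl, hc⟩]
        ring
      · have hC : ¬ ∀ j : Fin n, j < k → sigmaInvFun p n k lam j = 0 :=
          fun h => hc ((sigmaInvFun_cond p n k lam).mp h)
        unfold sigmaFun
        rw [if_neg (by tauto)]
        unfold sigmaInvFun
        rw [if_neg (by tauto)]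
    · exact (sigmaFun_apply_ne p n i _ hk).trans (sigmaInvFun_apply_ne p n i lam hk)

/-- `P_n = ⟨σ_0, …, σ_{n-1}⟩`, a Sylow `p`-subgroup of `Sym(F_p^n)`. -/
def PSyl : Subgroup (Equiv.Perm (Fin n → ZMod p)) :=
  Subgroup.closure (Set.range (sigmaPerm p n))


/-- Weir's filtration subgroup `T_j`: the normal closure in `P_n` of
`⟨σ_j, …, σ_{n-1}⟩`, i.e. the subgroup generated by all `P_n`-conjugates of the
`σ_i` with `i ≥ j`. -/
def TFilt (j : ℕ) : Subgroup (Equiv.Perm (Fin n → ZMod p)) :=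
  Subgroup.closure
    {x | ∃ g ∈ PSyl p n, ∃ i : Fin n, j ≤ (i : ℕ) ∧ x = g * sigmaPerm p n i * g⁻¹}

theorem Equiv.Perm.apply_inv_self {α : Type*} (f : Equiv.Perm α) (x : α) : f (f⁻¹ x) = x :=
  Equiv.apply_symm_apply f x

theorem Equiv.Perm.inv_apply_self {α : Type*} (f : Equiv.Perm α) (x : α) : f⁻¹ (f x) = x :=
  Equiv.symm_apply_apply f x

section AuxLemmas

lemma sigmaPerm_apply (i : Fin n) (x : Fin n → ZMod p) :
    sigmaPerm p n i x = sigmaFun p n i x := rfl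

lemma sigmaPerm_inv_apply (i : Fin n) (x : Fin n → ZMod p) :
    (sigmaPerm p n i)⁻¹ x = sigmaInvFun p n i x := rfl

lemma sigmaFun_of_not (i : Fin n) (x : Fin n → ZMod p)
    (h : ¬ ∀ j : Fin n, j < i → x j = 0) : sigmaFun p n i x = x := by
  funext k; unfold sigmaFun; rw [if_neg (fun hc => h hc.2)]

lemma sigmaInvFun_of_not (i : Fin n) (x : Fin n → ZMod p)
    (h : ¬ ∀ j : Fin n, j < i → x j = 0) : sigmaInvFun p n i x = x := by
  funext k; unfold sigmaInvFun; rw [if_neg (fun hc => h hc.2)]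

lemma sigmaFun_of (i : Fin n) (x : Fin n → ZMod p)
    (h : ∀ j : Fin n, j < i → x j = 0) (k : Fin n) :
    sigmaFun p n i x k = if k = i then x k + 1 else x k := by
  unfold sigmaFun
  by_cases hk : k = i
  · rw [if_pos ⟨hk, h⟩, if_pos hk]
  · rw [if_neg (fun hc => hk hc.1), if_neg hk]

lemma sigmaInvFun_of (i : Fin n) (x : Fin n → ZMod p)
    (h : ∀ j : Fin n, j < i → x j = 0) (k : Fin n) :
    sigmaInvFun p n i x k = if k = i then x k - 1 else x k := by
  unfold sigmaInvFun
  by_cases hk : k = i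
  · rw [if_pos ⟨hk, h⟩, if_pos hk]
  · rw [if_neg (fun hc => hk hc.1), if_neg hk]

lemma sigmaPerm_mem : ∀ i : Fin n, sigmaPerm p n i ∈ PSyl p n := fun i =>
  Subgroup.subset_closure (Set.mem_range_self i)

/-- The cocycle property: below level `l` the action is determined, and at level `l`
the shift is determined by the coordinates below `l`. -/
def Shifty (e : Equiv.Perm (Fin n → ZMod p)) : Prop :=
  ∀ (l : Fin n) (x y : Fin n → ZMod p),
    (∀ j : Fin n, j < l → x j = y j) → e x l - x l = e y l - y l

lemma shifty_sigma (i : Fin n) : Shifty p n (sigmaPerm p n i) := by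
  intro l x y h
  by_cases hl : l = i
  · subst hl
    by_cases hc : ∀ j : Fin n, j < l → x j = 0
    · have hc' : ∀ j : Fin n, j < l → y j = 0 := fun j hj => (h j hj) ▸ hc j hj
      rw [sigmaPerm_apply, sigmaPerm_apply, sigmaFun_of p n l x hc l, sigmaFun_of p n l y hc' l]
      simp
    · have hc' : ¬ ∀ j : Fin n, j < l → y j = 0 := fun hy =>
        hc (fun j hj => (h j hj).symm ▸ hy j hj)
      rw [sigmaPerm_apply, sigmaPerm_apply, sigmaFun_of_not p n l x hc,
        sigmaFun_of_not p n l y hc']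
      rw [sub_self, sub_self]
  · rw [sigmaPerm_apply, sigmaPerm_apply, sigmaFun_apply_ne p n i x hl,
      sigmaFun_apply_ne p n i y hl, sub_self, sub_self]

lemma shifty_sigma_inv (i : Fin n) : Shifty p n (sigmaPerm p n i)⁻¹ := by
  intro l x y h
  by_cases hl : l = i
  · subst hl
    by_cases hc : ∀ j : Fin n, j < l → x j = 0
    · have hc' : ∀ j : Fin n, j < l → y j = 0 := fun j hj => (h j hj) ▸ hc j hj
      rw [sigmaPerm_inv_apply, sigmaPerm_inv_apply, sigmaInvFun_of p n l x hc l,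
        sigmaInvFun_of p n l y hc' l]
      simp
    · have hc' : ¬ ∀ j : Fin n, j < l → y j = 0 := fun hy =>
        hc (fun j hj => (h j hj).symm ▸ hy j hj)
      rw [sigmaPerm_inv_apply, sigmaPerm_inv_apply, sigmaInvFun_of_not p n l x hc,
        sigmaInvFun_of_not p n l y hc']
      rw [sub_self, sub_self]
  · rw [sigmaPerm_inv_apply, sigmaPerm_inv_apply, sigmaInvFun_apply_ne p n i x hl,
      sigmaInvFun_apply_ne p n i y hl, sub_self, sub_self]

lemma shifty_mul {e f : Equiv.Perm (Fin n → ZMod p)}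
    (he : Shifty p n e) (hf : Shifty p n f) : Shifty p n (e * f) := by
  intro l x y h
  have hagree : ∀ j : Fin n, j < l → f x j = f y j := by
    intro j hj
    have h' : ∀ j' : Fin n, j' < j → x j' = y j' := fun j' hj' => h j' (hj'.trans hj)
    have := hf j x y h'
    have hxy := h j hj
    rw [hxy, sub_left_inj] at this
    exact this
  have h1 := he l (f x) (f y) hagree
  have h2 := hf l x y h
  simp only [Equiv.Perm.mul_apply]
  linear_combination h1 + h2

lemma shifty_of_mem {e : Equiv.Perm (Fin n → ZMod p)} (he : e ∈ PSyl p n) :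
    Shifty p n e := by
  have he' : e ∈ Submonoid.closure
      (Set.range (sigmaPerm p n) ∪ (Set.range (sigmaPerm p n))⁻¹) := by
    rw [← Subgroup.closure_toSubmonoid]
    exact he
  refine Submonoid.closure_induction (fun x hx => ?_) (fun l x y _ => by simp) 
    (fun x y _ _ hx hy => shifty_mul p n hx hy) he'
  rcases hx with hx | hx
  · obtain ⟨i, rfl⟩ := hx
    exact shifty_sigma p n i
  · obtain ⟨i, hi⟩ := Set.mem_inv.mp hx
    have hxi : x = (sigmaPerm p n i)⁻¹ := by rw [hi, inv_inv]
    rw [hxi]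
    exact shifty_sigma_inv p n i

lemma psyl_agree {e : Equiv.Perm (Fin n → ZMod p)} (he : e ∈ PSyl p n) {M : ℕ}
    {x y : Fin n → ZMod p} (h : ∀ j : Fin n, j.val < M → x j = y j) :
    ∀ j : Fin n, j.val < M → e x j = e y j := by
  intro j hj
  have h' : ∀ j' : Fin n, j' < j → x j' = y j' := fun j' hj' =>
    h j' (lt_trans hj' hj)
  have := shifty_of_mem p n he j x y h'
  have hxy := h j hj
  rw [hxy, sub_left_inj] at this
  exact this

end AuxLemmas
section FiltLemmas

/-- Permutations fixing all coordinates below `j` (of every point). -/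
def Kfix (j : ℕ) : Subgroup (Equiv.Perm (Fin n → ZMod p)) where
  carrier := {e | ∀ (x : Fin n → ZMod p) (i : Fin n), i.val < j → e x i = x i}
  one_mem' := fun x i _ => rfl
  mul_mem' := by
    intro a b ha hb x i hi
    rw [Equiv.Perm.mul_apply, ha (b x) i hi, hb x i hi]
  inv_mem' := by
    intro a ha x i hi
    have := ha (a⁻¹ x) i hi
    rw [Equiv.Perm.apply_inv_self] at this
    exact this.symm

/-- Permutations fixing all coordinates from `j` on (of every point). -/
def HFix (j : ℕ) : Subgroup (Equiv.Perm (Fin n → ZMod p)) where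
  carrier := {e | ∀ (x : Fin n → ZMod p) (i : Fin n), j ≤ i.val → e x i = x i}
  one_mem' := fun x i _ => rfl
  mul_mem' := by
    intro a b ha hb x i hi
    rw [Equiv.Perm.mul_apply, ha (b x) i hi, hb x i hi]
  inv_mem' := by
    intro a ha x i hi
    have := ha (a⁻¹ x) i hi
    rw [Equiv.Perm.apply_inv_self] at this
    exact this.symm

lemma sigma_mem_kfix {j : ℕ} {i : Fin n} (hij : j ≤ i.val) :
    sigmaPerm p n i ∈ Kfix p n j := by
  intro x k hk
  exact sigmaFun_apply_ne p n i x (fun h => absurd (h ▸ hk) (not_lt.mpr hij))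

lemma sigma_mem_hfix {j : ℕ} {i : Fin n} (hij : i.val < j) :
    sigmaPerm p n i ∈ HFix p n j := by
  intro x k hk
  exact sigmaFun_apply_ne p n i x (fun h => absurd hij (not_lt.mpr (h ▸ hk)))

lemma conj_sigma_mem_kfix {j : ℕ} {g : Equiv.Perm (Fin n → ZMod p)} (hg : g ∈ PSyl p n)
    {i : Fin n} (hij : j ≤ i.val) : g * sigmaPerm p n i * g⁻¹ ∈ Kfix p n j := by
  intro x k hk
  simp only [Equiv.Perm.mul_apply]
  have hagree : ∀ j' : Fin n, j'.val < j → sigmaPerm p n i (g⁻¹ x) j' = (g⁻¹ x) j' :=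
    fun j' hj' => sigma_mem_kfix p n hij (g⁻¹ x) j' hj'
  have := psyl_agree p n hg hagree k hk
  rwa [Equiv.Perm.apply_inv_self] at this

lemma tfilt_le_kfix (j : ℕ) : TFilt p n j ≤ Kfix p n j := by
  apply Subgroup.closure_le (Kfix p n j) |>.mpr
  rintro x ⟨g, hg, i, hij, rfl⟩
  exact conj_sigma_mem_kfix p n hg hij

lemma tfilt_conj {j : ℕ} {g : Equiv.Perm (Fin n → ZMod p)} (hg : g ∈ PSyl p n)
    {x : Equiv.Perm (Fin n → ZMod p)} (hx : x ∈ TFilt p n j) :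
    g * x * g⁻¹ ∈ TFilt p n j := by
  refine Subgroup.closure_induction (k := {x | ∃ g ∈ PSyl p n, ∃ i : Fin n,
      j ≤ (i : ℕ) ∧ x = g * sigmaPerm p n i * g⁻¹})
    (p := fun x _ => g * x * g⁻¹ ∈ TFilt p n j) ?_ ?_ ?_ ?_ hx
  · rintro y ⟨h, hh, i, hij, rfl⟩
    apply Subgroup.subset_closure
    exact ⟨g * h, mul_mem hg hh, i, hij, by group⟩
  · simpa using one_mem _
  · intro a b _ _ ha hb
    have : g * (a * b) * g⁻¹ = (g * a * g⁻¹) * (g * b * g⁻¹) := by group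
    rw [this]
    exact mul_mem ha hb
  · intro a _ ha
    have : g * a⁻¹ * g⁻¹ = (g * a * g⁻¹)⁻¹ := by group
    rw [this]
    exact inv_mem ha

lemma sigma_mem_tfilt {j : ℕ} {i : Fin n} (hij : j ≤ i.val) :
    sigmaPerm p n i ∈ TFilt p n j :=
  Subgroup.subset_closure ⟨1, one_mem _, i, hij, by group⟩

/-- The subgroup generated by the `σ_i` with `i < j`. -/
def Slow (j : ℕ) : Subgroup (Equiv.Perm (Fin n → ZMod p)) :=
  Subgroup.closure {x | ∃ i : Fin n, i.val < j ∧ x = sigmaPerm p n i}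

lemma slow_le_psyl (j : ℕ) : Slow p n j ≤ PSyl p n := by
  apply Subgroup.closure_le (PSyl p n) |>.mpr
  rintro x ⟨i, _, rfl⟩
  exact sigmaPerm_mem p n i

lemma slow_le_hfix (j : ℕ) : Slow p n j ≤ HFix p n j := by
  apply Subgroup.closure_le (HFix p n j) |>.mpr
  rintro x ⟨i, hi, rfl⟩
  exact sigma_mem_hfix p n hi

lemma psyl_decomp {j : ℕ} {x : Equiv.Perm (Fin n → ZMod p)} (hx : x ∈ PSyl p n) :
    ∃ t ∈ TFilt p n j, ∃ s ∈ Slow p n j, x = t * s := by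
  refine Subgroup.closure_induction
    (p := fun x _ => ∃ t ∈ TFilt p n j, ∃ s ∈ Slow p n j, x = t * s) ?_ ?_ ?_ ?_ hx
  · rintro y ⟨i, rfl⟩
    rcases le_or_gt j i.val with h | h
    · exact ⟨sigmaPerm p n i, sigma_mem_tfilt p n h, 1, one_mem _, (mul_one _).symm⟩
    · exact ⟨1, one_mem _, sigmaPerm p n i, Subgroup.subset_closure ⟨i, h, rfl⟩,
        (one_mul _).symm⟩
  · exact ⟨1, one_mem _, 1, one_mem _, (mul_one 1).symm⟩
  · rintro a b _ _ ⟨t1, ht1, s1, hs1, rfl⟩ ⟨t2, ht2, s2, hs2, rfl⟩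
    refine ⟨t1 * (s1 * t2 * s1⁻¹), mul_mem ht1 (tfilt_conj p n (slow_le_psyl p n j hs1) ht2),
      s1 * s2, mul_mem hs1 hs2, by group⟩
  · rintro a _ ⟨t, ht, s, hs, rfl⟩
    refine ⟨s⁻¹ * t⁻¹ * s, ?_, s⁻¹, inv_mem hs, by group⟩
    have : s⁻¹ * t⁻¹ * s = s⁻¹ * t⁻¹ * (s⁻¹)⁻¹ := by group
    rw [this]
    exact tfilt_conj p n (inv_mem (slow_le_psyl p n j hs)) (inv_mem ht)

lemma kfix_psyl_le_tfilt {j : ℕ} {x : Equiv.Perm (Fin n → ZMod p)}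
    (hx : x ∈ PSyl p n) (hk : x ∈ Kfix p n j) : x ∈ TFilt p n j := by
  obtain ⟨t, ht, s, hs, rfl⟩ := psyl_decomp p n hx
  have hsK : s ∈ Kfix p n j := by
    have h2 : t⁻¹ * (t * s) ∈ Kfix p n j :=
      mul_mem (inv_mem (tfilt_le_kfix p n j ht)) hk
    simpa [mul_assoc] using h2
  have hsH : s ∈ HFix p n j := slow_le_hfix p n j hs
  have hs1 : s = 1 := by
    apply Equiv.ext
    intro z
    funext i
    rcases lt_or_ge i.val j with h | h
    · exact hsK z i h
    · exact hsH z i h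
  rw [hs1, mul_one]
  exact ht

end FiltLemmas
section Setter

lemma sigma_pow_apply (k : Fin n) (e : ℕ) :
    ∀ (x : Fin n → ZMod p), (∀ j : Fin n, j < k → x j = 0) → ∀ i : Fin n,
      ((sigmaPerm p n k) ^ e) x i = if i = k then x i + (e : ZMod p) else x i := by
  induction e with
  | zero =>
    intro x hx i
    simp only [pow_zero, Equiv.Perm.one_apply, Nat.cast_zero, add_zero, ite_self]
  | succ e ih =>
    intro x hx i
    rw [pow_succ, Equiv.Perm.mul_apply]
    have hx' : ∀ j : Fin n, j < k → (sigmaPerm p n k) x j = 0 := by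
      intro j hj
      rw [sigmaPerm_apply, sigmaFun_apply_ne p n k x (ne_of_lt hj)]
      exact hx j hj
    rw [ih (sigmaPerm p n k x) hx' i]
    by_cases hik : i = k
    · subst hik
      rw [if_pos rfl, if_pos rfl, sigmaPerm_apply, sigmaFun_of p n i x hx i, if_pos rfl]
      push_cast
      ring
    · rw [if_neg hik, if_neg hik, sigmaPerm_apply, sigmaFun_apply_ne p n k x hik]

lemma sigma_pow_inv_apply (k : Fin n) (e : ℕ) (y : Fin n → ZMod p)
    (hy : ∀ j : Fin n, j < k → y j = 0) (i : Fin n) :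
    ((sigmaPerm p n k) ^ e)⁻¹ y i = if i = k then y i - (e : ZMod p) else y i := by
  set x : Fin n → ZMod p := fun i => if i = k then y i - (e : ZMod p) else y i with hxdef
  have hxval : ∀ i : Fin n, x i = if i = k then y i - (e : ZMod p) else y i := fun i => rfl
  have hx : ∀ j : Fin n, j < k → x j = 0 := by
    intro j hj
    rw [hxval, if_neg (ne_of_lt hj)]
    exact hy j hj
  have hxy : ((sigmaPerm p n k) ^ e) x = y := by
    funext i'
    rw [sigma_pow_apply p n k e x hx i']
    by_cases h : i' = k
    · rw [if_pos h, hxval, if_pos h]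
      ring
    · rw [if_neg h, hxval, if_neg h]
  have hinv : ((sigmaPerm p n k) ^ e)⁻¹ y = x := by
    rw [← hxy, Equiv.Perm.inv_apply_self]
  rw [hinv, hxval]

/-- Product `σ_0^{c 0} * σ_1^{c 1} * ⋯ * σ_{k-1}^{c (k-1)}`. -/
def setter (c : ℕ → ℕ) : ℕ → Equiv.Perm (Fin n → ZMod p)
  | 0 => 1
  | k+1 => if h : k < n then setter c k * (sigmaPerm p n ⟨k, h⟩) ^ (c k) else setter c k

lemma setter_mem (c : ℕ → ℕ) (k : ℕ) : setter p n c k ∈ PSyl p n := by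
  induction k with
  | zero => exact one_mem _
  | succ k ih =>
    rw [setter]
    split
    · exact mul_mem ih (pow_mem (sigmaPerm_mem p n _) _)
    · exact ih

lemma setter_apply (c : ℕ → ℕ) (k : ℕ) (hk : k ≤ n) :
    ∀ (x : Fin n → ZMod p), (∀ j : Fin n, j.val < k → x j = 0) → ∀ i : Fin n,
      setter p n c k x i = if i.val < k then (c i.val : ZMod p) else x i := by
  induction k with
  | zero =>
    intro x hx i
    simp [setter]
  | succ k ih =>
    intro x hx i
    have hkn : k < n := Nat.lt_of_succ_le hk
    have hred : setter p n c (k+1) = setter p n c k * (sigmaPerm p n ⟨k, hkn⟩) ^ (c k) := by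
      rw [setter, dif_pos hkn]
    rw [hred, Equiv.Perm.mul_apply]
    set kf : Fin n := ⟨k, hkn⟩ with hkf
    have hkv : (kf : ℕ) = k := rfl
    have hne : ∀ {j : Fin n}, (j : ℕ) ≠ k → j ≠ kf := fun h hh => h (by subst hh; rfl)
    have hxk : ∀ j : Fin n, j < kf → x j = 0 := fun j hj =>
      hx j (Nat.lt_succ_of_lt hj)
    have hpow : ∀ i : Fin n, ((sigmaPerm p n kf) ^ (c k)) x i
        = if i = kf then x i + (c k : ZMod p) else x i :=
      sigma_pow_apply p n kf (c k) x hxk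
    have hx' : ∀ j : Fin n, j.val < k → ((sigmaPerm p n kf) ^ (c k)) x j = 0 := by
      intro j hj
      rw [hpow j, if_neg (hne (by omega))]
      exact hx j (Nat.lt_succ_of_lt hj)
    rw [ih (Nat.le_of_succ_le hk) _ hx' i]
    by_cases h : i.val < k
    · rw [if_pos h, if_pos (Nat.lt_succ_of_lt h)]
    · rw [if_neg h]
      by_cases h2 : i.val = k
      · have hik : i = kf := Fin.ext h2
        rw [if_pos (by omega), hpow i, if_pos hik, hx i (by omega), zero_add, h2]
      · rw [if_neg (by omega), hpow i, if_neg (hne h2)]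

lemma setter_inv_apply (c : ℕ → ℕ) (k : ℕ) (hk : k ≤ n) :
    ∀ (y : Fin n → ZMod p), (∀ j : Fin n, j.val < k → y j = (c j.val : ZMod p)) →
      ∀ i : Fin n, (setter p n c k)⁻¹ y i = if i.val < k then 0 else y i := by
  induction k with
  | zero =>
    intro y hy i
    simp [setter]
  | succ k ih =>
    intro y hy i
    have hkn : k < n := Nat.lt_of_succ_le hk
    have hred : setter p n c (k+1) = setter p n c k * (sigmaPerm p n ⟨k, hkn⟩) ^ (c k) := by
      rw [setter, dif_pos hkn]
    rw [hred, mul_inv_rev, Equiv.Perm.mul_apply]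
    set kf : Fin n := ⟨k, hkn⟩ with hkf
    have hkv : (kf : ℕ) = k := rfl
    have hne : ∀ {j : Fin n}, (j : ℕ) ≠ k → j ≠ kf := fun h hh => h (by subst hh; rfl)
    set y' := (setter p n c k)⁻¹ y with hy'def
    have hy'' : ∀ i : Fin n, y' i = if i.val < k then 0 else y i := by
      intro i
      rw [hy'def, ih (Nat.le_of_succ_le hk) y (fun j hj => hy j (Nat.lt_succ_of_lt hj)) i]
    have hy'low : ∀ j : Fin n, j < kf → y' j = 0 := by
      intro j hj
      rw [hy'' j, if_pos (show (j : ℕ) < k from hj)]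
    rw [sigma_pow_inv_apply p n kf (c k) y' hy'low i]
    by_cases h2 : i = kf
    · subst h2
      rw [if_pos rfl, if_pos (by rw [hkv]; omega), hy'' _, if_neg (by rw [hkv]; omega),
        hy _ (by rw [hkv]; omega), hkv]
      ring
    · rw [if_neg h2, hy'' i]
      have hik : (i : ℕ) ≠ k := fun hh => h2 (Fin.ext (by rw [hh, ← hkv]))
      by_cases h : i.val < k
      · rw [if_pos h, if_pos (by omega)]
      · rw [if_neg h, if_neg (by omega)]

end Setter
section Core

lemma core_contradiction (hp : p.Prime) {B : Subgroup (Equiv.Perm (Fin n → ZMod p))}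
    (hBP : B ≤ PSyl p n)
    (hBnormal : ∀ g ∈ PSyl p n, ∀ x ∈ B, g * x * g⁻¹ ∈ B)
    (hBab : ∀ a ∈ B, ∀ b ∈ B, a * b = b * a)
    (l : Fin n) (hl : l.val + 2 < n)
    (hK : ∀ x ∈ B, ∀ (z : Fin n → ZMod p) (j : Fin n), j < l → x z j = z j)
    {b : Equiv.Perm (Fin n → ZMod p)} (hb : b ∈ B) (lam : Fin n → ZMod p)
    (hbl : b lam l ≠ lam l) : False := by
  haveI : Fact (1 < p) := ⟨hp.one_lt⟩
  haveI : NeZero p := ⟨hp.ne_zero⟩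
  have hbP : b ∈ PSyl p n := hBP hb
  have hSb : Shifty p n b := shifty_of_mem p n hbP
  set r : ZMod p := b lam l - lam l with hr_def
  have hr : r ≠ 0 := sub_ne_zero.mpr hbl
  have shiftb : ∀ x : Fin n → ZMod p, (∀ j : Fin n, j < l → x j = lam j) →
      b x l = x l + r := by
    intro x hx
    have h1 := hSb l x lam hx
    rw [hr_def]
    linear_combination h1
  set X : (Fin n → ZMod p) → Prop := fun z => (∀ j : Fin n, j < l → z j = lam j) ∧ z l = 0
    with hXdef
  have hbinv : b⁻¹ ∈ B := B.inv_mem hb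
  -- The key relation: block-supported elements satisfy g = g⁻¹ on the block.
  have R : ∀ g ∈ PSyl p n, (∀ z, ¬ X z → g z = z) → ∀ y, X y → g y = g⁻¹ y := by
    intro g hg hsupp y hy
    have hsupp' : ∀ z, ¬ X z → g⁻¹ z = z := by
      intro z hz
      conv_lhs => rw [← hsupp z hz]
      exact Equiv.Perm.inv_apply_self g z
    have hxlow : ∀ j : Fin n, j < l → (b⁻¹ y) j = lam j := by
      intro j hj
      rw [hK b⁻¹ hbinv y j hj]
      exact hy.1 j hj
    have hbx : b (b⁻¹ y) = y := Equiv.Perm.apply_inv_self b y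
    have hxl : (b⁻¹ y) l = -r := by
      have h2 := shiftb (b⁻¹ y) hxlow
      rw [hbx, hy.2] at h2
      linear_combination -h2
    have hxX : ¬ X (b⁻¹ y) := by
      intro hX2
      apply hr
      have h3 := hX2.2
      rw [hxl] at h3
      exact neg_eq_zero.mp h3
    have hb' : g * b * g⁻¹ ∈ B := hBnormal g hg b hb
    have hcomm : b * (g * b * g⁻¹) = (g * b * g⁻¹) * b := hBab b hb _ hb'
    have heval : (b * (g * b * g⁻¹)) (b⁻¹ y) = ((g * b * g⁻¹) * b) (b⁻¹ y) := by
      rw [hcomm]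
    simp only [Equiv.Perm.mul_apply] at heval
    rw [hsupp' _ hxX, hbx] at heval
    -- heval : b (g y) = g (b (g⁻¹ y))
    have hzX : X (g⁻¹ y) := by
      by_contra hc
      have h3 := hsupp _ hc
      rw [Equiv.Perm.apply_inv_self] at h3
      exact hc (h3 ▸ hy)
    have hbzX : ¬ X (b (g⁻¹ y)) := by
      intro hc
      apply hr
      have h4 := shiftb (g⁻¹ y) hzX.1
      rw [hzX.2, zero_add] at h4
      rw [← h4]
      exact hc.2
    rw [hsupp _ hbzX] at heval
    exact Equiv.injective b heval
  -- The transporter `u` moving the principal block to the block of `lam`.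
  set c : ℕ → ℕ := fun j => if h : j < n then (lam ⟨j, h⟩).val else 0 with hcdef
  have hc_val : ∀ i : Fin n, (c i.val : ZMod p) = lam i := by
    intro i
    rw [hcdef]
    simp only [i.isLt, dif_pos, Fin.eta]
    exact ZMod.natCast_rightInverse (lam i)
  set u := setter p n c l.val with hudef
  have hu_mem : u ∈ PSyl p n := setter_mem p n c l.val
  have hln : l.val ≤ n := le_of_lt l.isLt
  have hu_fwd : ∀ x : Fin n → ZMod p, (∀ j : Fin n, j.val < l.val → x j = 0) →
      ∀ i : Fin n, u x i = if i.val < l.val then lam i else x i := by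
    intro x hx i
    rw [hudef, setter_apply p n c l.val hln x hx i]
    by_cases h : i.val < l.val
    · rw [if_pos h, if_pos h, hc_val]
    · rw [if_neg h, if_neg h]
  have hu_fwd_X : ∀ x : Fin n → ZMod p, (∀ j : Fin n, j.val ≤ l.val → x j = 0) →
      X (u x) := by
    intro x hx
    constructor
    · intro j hj
      rw [hu_fwd x (fun j' hj' => hx j' (le_of_lt hj')) j,
        if_pos (show (j : ℕ) < (l : ℕ) from hj)]
    · rw [hu_fwd x (fun j' hj' => hx j' (le_of_lt hj')) l, if_neg (lt_irrefl _),
        hx l (le_refl _)]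
  -- supported conjugates
  have key_supp : ∀ i : Fin n, l.val < i.val → ∀ z, ¬ X z →
      (u * sigmaPerm p n i * u⁻¹) z = z := by
    intro i hi z hz
    simp only [Equiv.Perm.mul_apply]
    have hcond : ¬ ∀ j : Fin n, j < i → (u⁻¹ z) j = 0 := by
      intro hcond
      apply hz
      have hx0 : ∀ j : Fin n, j.val ≤ l.val → (u⁻¹ z) j = 0 := fun j hj =>
        hcond j (show j.val < i.val by omega)
      have h5 := hu_fwd_X (u⁻¹ z) hx0
      rwa [Equiv.Perm.apply_inv_self] at h5
    have h5 : sigmaPerm p n i (u⁻¹ z) = u⁻¹ z := by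
      rw [sigmaPerm_apply, sigmaFun_of_not p n i _ hcond]
    rw [h5, Equiv.Perm.apply_inv_self]
  set i1 : Fin n := ⟨l.val + 1, by omega⟩ with hi1
  set i2 : Fin n := ⟨l.val + 2, hl⟩ with hi2
  have hi1v : (i1 : ℕ) = l.val + 1 := rfl
  have hi2v : (i2 : ℕ) = l.val + 2 := rfl
  have hne12 : i1 ≠ i2 := fun h => by
    have := congrArg Fin.val h
    rw [hi1v, hi2v] at this
    omega
  set g1 := u * sigmaPerm p n i1 * u⁻¹ with hg1def
  set g2 := u * sigmaPerm p n i2 * u⁻¹ with hg2def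
  have hg1P : g1 ∈ PSyl p n :=
    mul_mem (mul_mem hu_mem (sigmaPerm_mem p n i1)) (inv_mem hu_mem)
  have hg2P : g2 ∈ PSyl p n :=
    mul_mem (mul_mem hu_mem (sigmaPerm_mem p n i2)) (inv_mem hu_mem)
  have hs1 : ∀ z, ¬ X z → g1 z = z := key_supp i1 (by rw [hi1v]; omega)
  have hs2 : ∀ z, ¬ X z → g2 z = z := key_supp i2 (by rw [hi2v]; omega)
  have hs12 : ∀ z, ¬ X z → (g1 * g2) z = z := by
    intro z hz
    rw [Equiv.Perm.mul_apply, hs2 z hz, hs1 z hz]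
  set z0 : Fin n → ZMod p := fun _ => 0 with hz0
  set y0 := u z0 with hy0
  have hy0X : X y0 := hu_fwd_X z0 (fun _ _ => rfl)
  have hXstab : ∀ (g : Equiv.Perm (Fin n → ZMod p)), (∀ z, ¬ X z → g z = z) →
      ∀ y, X y → X (g y) := by
    intro g hg y hy
    by_contra hc
    have h6 := hg (g y) hc
    have h7 : g y = y := Equiv.injective g h6
    exact hc (by rwa [h7])
  have E1 := R g1 hg1P hs1
  have E2 := R g2 hg2P hs2
  have E12 := R (g1 * g2) (mul_mem hg1P hg2P) hs12
  have main : g1⁻¹ (g2⁻¹ y0) = g2⁻¹ (g1⁻¹ y0) := by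
    have h8 : g1 (g2 y0) = g2⁻¹ (g1⁻¹ y0) := by
      calc g1 (g2 y0) = (g1 * g2) y0 := rfl
        _ = (g1 * g2)⁻¹ y0 := E12 y0 hy0X
        _ = g2⁻¹ (g1⁻¹ y0) := by rw [mul_inv_rev]; rfl
    calc g1⁻¹ (g2⁻¹ y0) = g1⁻¹ (g2 y0) := by rw [← E2 y0 hy0X]
      _ = g1 (g2 y0) := (E1 (g2 y0) (hXstab g2 hs2 y0 hy0X)).symm
      _ = g2⁻¹ (g1⁻¹ y0) := h8
  -- explicit computation yielding a contradiction
  have hg1inv : g1⁻¹ = u * (sigmaPerm p n i1)⁻¹ * u⁻¹ := by rw [hg1def]; group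
  have hg2inv : g2⁻¹ = u * (sigmaPerm p n i2)⁻¹ * u⁻¹ := by rw [hg2def]; group
  have hu0 : u⁻¹ y0 = z0 := by rw [hy0]; exact Equiv.Perm.inv_apply_self u z0
  set A : Fin n → ZMod p := (sigmaPerm p n i2)⁻¹ z0 with hA_def
  set C : Fin n → ZMod p := (sigmaPerm p n i1)⁻¹ z0 with hC_def
  have hA : ∀ k : Fin n, A k = if k = i2 then (-1 : ZMod p) else 0 := by
    intro k
    rw [hA_def, sigmaPerm_inv_apply, sigmaInvFun_of p n i2 z0 (fun _ _ => rfl) k]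
    by_cases h : k = i2
    · rw [if_pos h, if_pos h]
      show (0 : ZMod p) - 1 = -1
      ring
    · rw [if_neg h, if_neg h]
  have hC : ∀ k : Fin n, C k = if k = i1 then (-1 : ZMod p) else 0 := by
    intro k
    rw [hC_def, sigmaPerm_inv_apply, sigmaInvFun_of p n i1 z0 (fun _ _ => rfl) k]
    by_cases h : k = i1
    · rw [if_pos h, if_pos h]
      show (0 : ZMod p) - 1 = -1
      ring
    · rw [if_neg h, if_neg h]
  have hmain2 : (sigmaPerm p n i1)⁻¹ A = (sigmaPerm p n i2)⁻¹ C := by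
    apply Equiv.injective u
    have hL : g1⁻¹ (g2⁻¹ y0) = u ((sigmaPerm p n i1)⁻¹ A) := by
      rw [hg1inv, hg2inv]
      simp only [Equiv.Perm.mul_apply]
      rw [hu0, Equiv.Perm.inv_apply_self, hA_def]
    have hR : g2⁻¹ (g1⁻¹ y0) = u ((sigmaPerm p n i2)⁻¹ C) := by
      rw [hg1inv, hg2inv]
      simp only [Equiv.Perm.mul_apply]
      rw [hu0, Equiv.Perm.inv_apply_self, hC_def]
    rw [← hL, ← hR]
    exact main
  -- evaluate both sides at i2
  have hAlow : ∀ j : Fin n, j < i1 → A j = 0 := by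
    intro j hj
    rw [hA j, if_neg (fun h => by
      have := congrArg Fin.val h
      rw [hi2v] at this
      have hjv : (j : ℕ) < l.val + 1 := hj
      omega)]
  have hL2 : (sigmaPerm p n i1)⁻¹ A i2 = -1 := by
    rw [sigmaPerm_inv_apply, sigmaInvFun_of p n i1 A hAlow i2,
      if_neg (fun h => hne12 h.symm), hA i2, if_pos rfl]
  have hCnot : ¬ ∀ j : Fin n, j < i2 → C j = 0 := by
    intro hcond
    have h9 := hcond i1 (show (i1 : ℕ) < (i2 : ℕ) by rw [hi1v, hi2v]; omega)
    rw [hC i1, if_pos rfl] at h9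
    exact one_ne_zero (neg_eq_zero.mp h9)
  have hR2 : (sigmaPerm p n i2)⁻¹ C i2 = 0 := by
    rw [sigmaPerm_inv_apply, sigmaInvFun_of_not p n i2 C hCnot, hC i2,
      if_neg (fun h => hne12 h.symm)]
  rw [hmain2, hR2] at hL2
  exact one_ne_zero (neg_eq_zero.mp hL2.symm)

end Core
/-- For `n ≥ 2`, every abelian normal subgroup `B` of `P_n` is contained in
`T_{n-2}`. -/
theorem abelian_normal_le_TFilt (hp : p.Prime) (hn : 2 ≤ n)
    (B : Subgroup (Equiv.Perm (Fin n → ZMod p)))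
    (hBP : B ≤ PSyl p n)
    (hBnormal : ∀ g ∈ PSyl p n, ∀ x ∈ B, g * x * g⁻¹ ∈ B)
    (hBab : ∀ a ∈ B, ∀ b ∈ B, a * b = b * a) :
    B ≤ TFilt p n (n - 2) := by
  have main : ∀ M : ℕ, M ≤ n - 2 → ∀ b ∈ B, ∀ (z : Fin n → ZMod p) (j : Fin n),
      j.val < M → b z j = z j := by
    intro M
    induction M with
    | zero => intro _ b _ z j hj; exact absurd hj (Nat.not_lt_zero _)
    | succ M ih =>
      intro hM b hb z j hj
      rcases Nat.lt_or_ge j.val M with h | h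
      · exact ih (le_trans (Nat.le_succ M) hM) b hb z j h
      · have hjM : j.val = M := by omega
        by_contra hne
        refine core_contradiction p n hp hBP hBnormal hBab j (by omega) ?_ hb z hne
        intro x hx z' j' hj'
        exact ih (by omega) x hx z' j' (by omega)
  intro x hx
  exact kfix_psyl_le_tfilt p n (hBP hx)
    (fun z i hi => main (n - 2) le_rfl x hx z i hi)
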